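/- Let c ≥ 1 and d ∈ ℕ, and let 𝓣_c(d) denote the set of real d×d lower triangular matrices A = (a_{ij}) such that |a_{11}| ≥ |a_{22}| ≥ … ≥ |a_{dd}| > 0 and |a_{ij}| ≤ c|a_{jj}| for all 1 ≤ i,j ≤ d. Then for every n ∈ ℕ and all A_1,…,A_n ∈ 𝓣_c(d), and all indices 1 ≤ j ≤ i ≤ d, the product satisfies |(A_1⋯A_n)_{ij}| ≤ (cn)^{i−j} |(A_1⋯A_n)_{jj}|. -/

import Mathlib

open scoped Matrix

noncomputable section

/-- Membership in the class `𝓣_c(d)` : real `d×d` lower triangular matrices whose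
diagonal entries are nonzero and decreasing in absolute value, and whose entries
satisfy `|a_{ij}| ≤ c |a_{jj}|`. -/
def MemTc {d : ℕ} (c : ℝ) (A : Matrix (Fin d) (Fin d) ℝ) : Prop :=
  (∀ i j : Fin d, i < j → A i j = 0) ∧
  (∀ i j : Fin d, i ≤ j → |A j j| ≤ |A i i|) ∧
  (∀ i : Fin d, 0 < |A i i|) ∧
  (∀ i j : Fin d, |A i j| ≤ c * |A j j|)

/-- The product of lower triangular matrices is lower triangular. -/
lemma prod_lower_aux {d : ℕ} (L : List (Matrix (Fin d) (Fin d) ℝ))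
    (h : ∀ A ∈ L, ∀ i j : Fin d, i < j → A i j = 0) :
    ∀ i j : Fin d, i < j → L.prod i j = 0 := by
  induction L with
  | nil =>
    intro i j hij
    simp [Matrix.one_apply_ne (ne_of_lt hij)]
  | cons A M ih =>
    intro i j hij
    have hA := h A (List.mem_cons_self)
    have hM : ∀ B ∈ M, ∀ i j : Fin d, i < j → B i j = 0 :=
      fun B hB => h B (List.mem_cons_of_mem _ hB)
    rw [List.prod_cons, Matrix.mul_apply]
    apply Finset.sum_eq_zero
    intro k _
    rcases lt_or_ge i k with hk | hk
    · rw [hA i k hk, zero_mul]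
    · rw [ih hM k j (lt_of_le_of_lt hk hij), mul_zero]

/-- Diagonal entry of a product headed by a lower triangular matrix. -/
lemma cons_diag_aux {d : ℕ} (A : Matrix (Fin d) (Fin d) ℝ)
    (M : List (Matrix (Fin d) (Fin d) ℝ))
    (hA : ∀ i j : Fin d, i < j → A i j = 0)
    (hM : ∀ B ∈ M, ∀ i j : Fin d, i < j → B i j = 0) (j : Fin d) :
    ((A :: M).prod) j j = A j j * M.prod j j := by
  rw [List.prod_cons, Matrix.mul_apply]
  apply Finset.sum_eq_single j
  · intro k _ hk
    rcases lt_or_gt_of_ne hk with h1 | h1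
    · rw [prod_lower_aux M hM k j h1, mul_zero]
    · rw [hA j k h1, zero_mul]
  · intro h; exact absurd (Finset.mem_univ j) h

/-- The key numeric inequality. -/
lemma key_num_aux (c : ℝ) (hc : 1 ≤ c) (m k : ℕ) (hm : 1 ≤ m) :
    (c * m) ^ k + c * ∑ t ∈ Finset.range k, (c * m) ^ t
      ≤ (c * (m + 1)) ^ k := by
  set y : ℝ := c * m with hy
  set x : ℝ := c * (m + 1) with hx
  have hy1 : 1 ≤ y := by
    have : (1 : ℝ) ≤ (m : ℝ) := by exact_mod_cast hm
    calc (1 : ℝ) = 1 * 1 := by ring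
    _ ≤ c * m := mul_le_mul hc this zero_le_one (le_trans zero_le_one hc)
  have hxy : x - y = c := by rw [hx, hy]; ring
  have hkey : x ^ k - y ^ k = (∑ t ∈ Finset.range k, x ^ t * y ^ (k - 1 - t)) * c := by
    rw [← hxy, geom_sum₂_mul]
  have hterm : ∀ t ∈ Finset.range k, y ^ t ≤ x ^ t * y ^ (k - 1 - t) := by
    intro t ht
    have ht' : t ≤ k - 1 := Nat.le_sub_one_of_lt (Finset.mem_range.mp ht)
    have h1 : y ^ t ≤ y ^ (k - 1) := pow_le_pow_right₀ hy1 ht'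
    have h2 : y ^ (k - 1) = y ^ t * y ^ (k - 1 - t) := by
      rw [← pow_add, Nat.add_sub_cancel' ht']
    have h3 : y ^ t * y ^ (k - 1 - t) ≤ x ^ t * y ^ (k - 1 - t) := by
      apply mul_le_mul_of_nonneg_right _ (pow_nonneg (by linarith) _)
      apply pow_le_pow_left₀ (by linarith)
      rw [hx, hy]
      have : (0:ℝ) ≤ c := by linarith
      nlinarith [Nat.cast_nonneg (α := ℝ) m]
    calc y ^ t ≤ y ^ (k - 1) := h1
    _ = y ^ t * y ^ (k - 1 - t) := h2
    _ ≤ x ^ t * y ^ (k - 1 - t) := h3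
  have hsum : ∑ t ∈ Finset.range k, y ^ t ≤ ∑ t ∈ Finset.range k, x ^ t * y ^ (k - 1 - t) :=
    Finset.sum_le_sum hterm
  have hc0 : (0:ℝ) ≤ c := by linarith
  nlinarith [mul_le_mul_of_nonneg_left hsum hc0]

/-- Lemma 4.4: for `c ≥ 1`, `n ≥ 1` and `A₁, …, Aₙ ∈ 𝓣_c(d)`,
the ordered product satisfies `|(A₁⋯Aₙ)_{ij}| ≤ (cn)^{i-j} |(A₁⋯Aₙ)_{jj}|`
for all `1 ≤ j ≤ i ≤ d`. -/
theorem product_entries_bound_of_Tc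
    {d : ℕ} (c : ℝ) (hc : 1 ≤ c)
    (L : List (Matrix (Fin d) (Fin d) ℝ))
    (hL : ∀ A ∈ L, MemTc c A) (hn : L ≠ []) :
    ∀ i j : Fin d, j ≤ i →
      |L.prod i j| ≤ (c * L.length) ^ ((i : ℕ) - (j : ℕ)) * |L.prod j j| := by
  induction L with
  | nil => exact absurd rfl hn
  | cons A M ih =>
    intro i j hij
    have hA : MemTc c A := hL A (List.mem_cons_self)
    have hM : ∀ B ∈ M, MemTc c B := fun B hB => hL B (List.mem_cons_of_mem _ hB)
    have hAlow : ∀ i j : Fin d, i < j → A i j = 0 := hA.1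
    have hMlow : ∀ B ∈ M, ∀ i j : Fin d, i < j → B i j = 0 := fun B hB => (hM B hB).1
    set P := M.prod with hP
    have hPlow : ∀ i j : Fin d, i < j → P i j = 0 := prod_lower_aux M hMlow
    have hdiag : ((A :: M).prod) j j = A j j * P j j := cons_diag_aux A M hAlow hMlow j
    set k : ℕ := (i : ℕ) - (j : ℕ) with hk
    rcases eq_or_ne M [] with rfl | hM0
    · -- single matrix
      simp only [List.prod_cons, List.prod_nil, mul_one, List.length_cons,
        List.length_nil, Nat.zero_add, Nat.cast_one]
      rcases eq_or_lt_of_le hij with heq | hlt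
      · have : i = j := heq.symm
        subst this
        simp [hk]
      · have hk0 : k ≠ 0 := by
          have : (j : ℕ) < (i : ℕ) := hlt
          omega
        have h1 : |A i j| ≤ c * |A j j| := hA.2.2.2 i j
        have h2 : c ≤ c ^ k := le_self_pow₀ hc hk0
        calc |A i j| ≤ c * |A j j| := h1
        _ ≤ c ^ k * |A j j| :=
            mul_le_mul_of_nonneg_right h2 (abs_nonneg _)
    · -- inductive step
      have IH := ih hM hM0
      set m : ℕ := M.length with hm
      have hm1 : 1 ≤ m := by
        rcases M with _ | ⟨B, M'⟩
        · exact absurd rfl hM0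
        · simp [hm]
      -- bound on the entry via the sum
      have hexp : ((A :: M).prod) i j = ∑ l : Fin d, A i l * P l j := by
        rw [List.prod_cons, Matrix.mul_apply]
      have hzero : ∀ l ∈ Finset.univ, l ∉ Finset.Icc j i → A i l * P l j = 0 := by
        intro l _ hl
        rw [Finset.mem_Icc, not_and_or] at hl
        rcases hl with hl | hl
        · rw [hPlow l j (lt_of_not_ge hl), mul_zero]
        · rw [hAlow i l (lt_of_not_ge hl), zero_mul]
      have hsum_eq : ∑ l : Fin d, A i l * P l j = ∑ l ∈ Finset.Icc j i, A i l * P l j :=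
        (Finset.sum_subset (Finset.subset_univ _) hzero).symm
      -- termwise bound
      have habs : |((A :: M).prod) i j| ≤ ∑ l ∈ Finset.Icc j i, |A i l * P l j| := by
        rw [hexp, hsum_eq]
        exact Finset.abs_sum_le_sum_abs _ _
      have hterm : ∀ l ∈ Finset.Icc j i, |A i l * P l j| ≤
          (if l = i then 1 else c) * |A j j| * ((c * m) ^ ((l:ℕ) - (j:ℕ)) * |P j j|) := by
        intro l hl
        rw [Finset.mem_Icc] at hl
        have hPl : |P l j| ≤ (c * m) ^ ((l:ℕ) - (j:ℕ)) * |P j j| := IH l j hl.1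
        rw [abs_mul]
        by_cases hli : l = i
        · subst hli
          rw [if_pos rfl, one_mul]
          exact mul_le_mul (hA.2.1 j l hl.1) hPl (abs_nonneg _) (abs_nonneg _)
        · simp only [if_neg hli]
          have h1 : |A i l| ≤ c * |A l l| := hA.2.2.2 i l
          have h2 : |A l l| ≤ |A j j| := hA.2.1 j l hl.1
          have h3 : |A i l| ≤ c * |A j j| := le_trans h1 (by nlinarith)
          exact mul_le_mul h3 hPl (abs_nonneg _)
            (mul_nonneg (by linarith) (abs_nonneg _))
      have hbound : |((A :: M).prod) i j| ≤
          ∑ l ∈ Finset.Icc j i,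
            (if l = i then 1 else c) * |A j j| * ((c * m) ^ ((l:ℕ) - (j:ℕ)) * |P j j|) :=
        le_trans habs (Finset.sum_le_sum hterm)
      -- compute the sum
      have hsplit : Finset.Icc j i = insert i (Finset.Ico j i) := (Finset.Ico_insert_right hij).symm
      have hnoti : i ∉ Finset.Ico j i := by simp
      have hsum2 : ∑ l ∈ Finset.Icc j i,
            (if l = i then 1 else c) * |A j j| * ((c * m) ^ ((l:ℕ) - (j:ℕ)) * |P j j|)
          = (1 * |A j j| * ((c * m) ^ k * |P j j|)) +
            ∑ l ∈ Finset.Ico j i, c * |A j j| * ((c * m) ^ ((l:ℕ) - (j:ℕ)) * |P j j|) := by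
        rw [hsplit, Finset.sum_insert hnoti, if_pos rfl]
        congr 1
        apply Finset.sum_congr rfl
        intro l hl
        rw [Finset.mem_Ico] at hl
        rw [if_neg (ne_of_lt hl.2)]
      -- reindex the Ico sum
      have hreindex : ∑ l ∈ Finset.Ico j i, (c * m) ^ ((l:ℕ) - (j:ℕ))
          = ∑ t ∈ Finset.range k, (c * m) ^ t := by
        have h1 : ∑ l ∈ Finset.Ico j i, (c * m) ^ ((l:ℕ) - (j:ℕ))
            = ∑ a ∈ Finset.Ico (j:ℕ) (i:ℕ), (c * m) ^ (a - (j:ℕ)) := by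
          rw [← Fin.map_valEmbedding_Ico, Finset.sum_map]
          rfl
        rw [h1, Finset.sum_Ico_eq_sum_range]
        apply Finset.sum_congr rfl
        intro t _
        congr 1
        omega
      have hfac : ∑ l ∈ Finset.Ico j i, c * |A j j| * ((c * m) ^ ((l:ℕ) - (j:ℕ)) * |P j j|)
          = c * (∑ t ∈ Finset.range k, (c * m) ^ t) * (|A j j| * |P j j|) := by
        rw [← hreindex]
        simp only [Finset.mul_sum, Finset.sum_mul]
        apply Finset.sum_congr rfl
        intro l _
        ring
      -- apply the key numeric inequality
      have hnum := key_num_aux c hc m k hm1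
      have hABs : (0:ℝ) ≤ |A j j| * |P j j| := mul_nonneg (abs_nonneg _) (abs_nonneg _)
      have hfinal : |((A :: M).prod) i j| ≤
          ((c * m) ^ k + c * ∑ t ∈ Finset.range k, (c * m) ^ t) * (|A j j| * |P j j|) := by
        calc |((A :: M).prod) i j|
            ≤ ∑ l ∈ Finset.Icc j i,
              (if l = i then 1 else c) * |A j j| * ((c * m) ^ ((l:ℕ) - (j:ℕ)) * |P j j|) := hbound
        _ = (1 * |A j j| * ((c * m) ^ k * |P j j|)) +
              ∑ l ∈ Finset.Ico j i, c * |A j j| * ((c * m) ^ ((l:ℕ) - (j:ℕ)) * |P j j|) := hsum2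
        _ = ((c * m) ^ k + c * ∑ t ∈ Finset.range k, (c * m) ^ t) * (|A j j| * |P j j|) := by
              rw [hfac]; ring
      have hlen : ((A :: M).length : ℝ) = (m : ℝ) + 1 := by
        simp [hm]
      rw [hdiag, abs_mul, hlen]
      calc |((A :: M).prod) i j|
          ≤ ((c * m) ^ k + c * ∑ t ∈ Finset.range k, (c * m) ^ t) * (|A j j| * |P j j|) := hfinal
      _ ≤ (c * ((m:ℝ) + 1)) ^ k * (|A j j| * |P j j|) :=
            mul_le_mul_of_nonneg_right hnum hABs
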